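/- Let 1 → G1 → G → G2 → 1 be an exact sequence of groups. If every finite subgroup of G2 has order at most B, and every finite subgroup of G1 contains an abelian subgroup of index at most J, then every finite subgroup of G contains an abelian subgroup of index at most B·J. -/

import Mathlib

/-- Given an exact sequence 1 → G1 → G → G2 → 1: if every finite subgroup of `G2`
has order at most `B`, and every finite subgroup of `G1` contains an abelian subgroup
of index at most `J`, then every finite subgroup of `G` contains an abelian subgroup
of index at most `B * J`. -/
theorem stmt1 {G1 G G2 : Type*} [Group G1] [Group G] [Group G2]
    (f : G1 →* G) (g : G →* G2)
    (hf : Function.Injective f) (hg : Function.Surjective g) (hexact : f.range = g.ker)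
    (B J : ℕ)
    (hB : ∀ K : Subgroup G2, Finite ↥K → Nat.card ↥K ≤ B)
    (hJ : ∀ K : Subgroup G1, Finite ↥K → ∃ A : Subgroup G1, A ≤ K ∧
      (∀ a ∈ A, ∀ b ∈ A, a * b = b * a) ∧ A.relIndex K ≤ J) :
    ∀ K : Subgroup G, Finite ↥K → ∃ A : Subgroup G, A ≤ K ∧
      (∀ a ∈ A, ∀ b ∈ A, a * b = b * a) ∧ A.relIndex K ≤ B * J := by
  intro K hK
  -- N = kernel part of K
  set N : Subgroup G := g.ker ⊓ K with hN
  have hNK : N ≤ K := inf_le_right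
  have hNrange : N ≤ f.range := by rw [hexact]; exact inf_le_left
  have hNfin : Finite ↥N := ((Set.toFinite (K : Set G)).subset hNK).to_subtype
  -- preimage in G1
  set H : Subgroup G1 := N.comap f with hH
  have hmapH : H.map f = N := Subgroup.map_comap_eq_self hNrange
  have hHfin : Finite ↥H := by
    have : Finite ↥(H.map f) := by rw [hmapH]; infer_instance
    exact Finite.of_equiv _ (Subgroup.equivMapOfInjective H f hf).symm.toEquiv
  obtain ⟨A', hA'H, hA'ab, hA'rel⟩ := hJ H hHfin
  refine ⟨A'.map f, ?_, ?_, ?_⟩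
  · exact le_trans (le_trans (Subgroup.map_mono hA'H) hmapH.le) hNK
  · rintro a ⟨a', ha', rfl⟩ b ⟨b', hb', rfl⟩
    rw [← map_mul, ← map_mul, hA'ab a' ha' b' hb']
  · have h1 : (A'.map f).relIndex N ≤ J := by
      have : (A'.map f).relIndex (H.map f) = A'.relIndex H := by
        rw [← Subgroup.relIndex_comap, Subgroup.comap_map_eq_self_of_injective hf]
      rw [← hmapH, this]; exact hA'rel
    have h2 : N.relIndex K ≤ B := by
      rw [hN, Subgroup.inf_relIndex_right, Subgroup.relIndex_ker K g]
      refine hB (K.map g) ?_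
      have : ((K.map g : Subgroup G2) : Set G2) = g '' (K : Set G) := rfl
      exact (Set.Finite.image g (Set.toFinite _)).to_subtype
    calc (A'.map f).relIndex K
        = (A'.map f).relIndex N * N.relIndex K := by
          rw [Subgroup.relIndex_mul_relIndex _ _ _
            (le_trans (Subgroup.map_mono hA'H) hmapH.le) hNK]
      _ ≤ J * B := Nat.mul_le_mul h1 h2
      _ = B * J := Nat.mul_comm _ _
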